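/- arXiv:2106.07743 — 3 statements merged into one kernel-verified Lean document; each statement's English description precedes it below -/
import Mathlib

section
/- Let S : X → V and Q : X → H be bounded linear operators between Hilbert spaces and suppose there exist constants 0 < c₁ ≤ c₂ such that c₁‖Sx‖_V ≤ ‖Qx‖_H ≤ c₂‖Sx‖_V for every x ∈ X. Then Range(S*) = Range(Q*), where S* : V → X* and Q* : H → X* are the adjoint operators into the dual space of X. -/
open Complex InnerProductSpace Filter Topology ENNReal TopologicalSpace

noncomputable section

local notation "⟪" x ", " y "⟫" => @inner ℂ _ _ x y

/-- `X*`: the continuous dual of a complex Hilbert space `X`, modeled as the space of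
continuous conjugate-linear functionals, so that the dual pairing
`⟨x, ℓ⟩_{X×X*} := conj (ℓ x)` is sesquilinear (linear in `x`, conjugate-linear in `ℓ`). -/
abbrev ADual (X : Type*) [NormedAddCommGroup X] [InnerProductSpace ℂ X] := X →L⋆[ℂ] ℂ

section defs
variable {X : Type*} [NormedAddCommGroup X] [InnerProductSpace ℂ X]

/-- The sesquilinear dual pairing `⟨x, ℓ⟩_{X×X*}`. -/
def dpair (x : X) (ℓ : ADual X) : ℂ := starRingEnd ℂ (ℓ x)

variable [CompleteSpace X]

/-- `J : X* → X`, the Riesz isometry, determined by `(x, Jℓ)_X = ⟨x, ℓ⟩_{X×X*}`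
(with the paper's inner product, linear in the first slot; in Mathlib's convention
this reads `⟪Jℓ, x⟫ = conj (ℓ x)` for all `x`). -/
def rieszJ (ℓ : ADual X) : X :=
  (InnerProductSpace.toDual ℂ X).symm
    { toFun := fun x => starRingEnd ℂ (ℓ x)
      map_add' := fun x y => by simp
      map_smul' := fun c x => by simp [mul_comm]
      cont := continuous_star.comp ℓ.continuous }

/-- A bounded operator `A : X → X*` is positive if `⟨x, Ax⟩_{X×X*} > 0`
(i.e. it is a positive real number) for every `x ≠ 0`. -/
def IsPositiveOp (A : X →L[ℂ] ADual X) : Prop :=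
  ∀ x : X, x ≠ 0 → 0 < (dpair x (A x)).re ∧ (dpair x (A x)).im = 0

/-- Spectral data `{λ_n; x_n; ℓ_n}` of a positive compact operator `A : X → X*`:
a nonincreasing sequence `λ_n > 0` tending to `0`, an orthonormal basis `x_n` of `X`
of eigenvectors of `JA` with `(JA)x_n = λ_n x_n`, and the dual basis `ℓ_n = J⁻¹x_n`. -/
structure SpectralData (A : X →L[ℂ] ADual X) (lam : ℕ → ℝ) (e : ℕ → X)
    (l : ℕ → ADual X) : Prop where
  pos : ∀ n, 0 < lam n
  anti : Antitone lam
  tendsto_zero : Tendsto lam atTop (𝓝 0)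
  orthonormal : Orthonormal ℂ e
  complete : (Submodule.span ℂ (Set.range e)).topologicalClosure = ⊤
  eig : ∀ n, rieszJ (A (e n)) = (lam n : ℂ) • e n
  dual_basis : ∀ n, rieszJ (l n) = e n

/-- A family of filter functions `f_α : (0, λ₁] → [0, ∞)`, `α > 0`, with
`f_α(t) → 1` as `α → 0` for every `t ∈ (0, λ₁]` and `f_α(t) ≤ C_reg`. -/
def IsFilterFamily (lam : ℕ → ℝ) (Creg : ℝ) (f : ℝ → ℝ → ℝ) : Prop :=
  0 < Creg ∧
    (∀ t ∈ Set.Ioc (0 : ℝ) (lam 0), Tendsto (fun α => f α t) (𝓝[>] (0 : ℝ)) (𝓝 1)) ∧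
    (∀ α > (0 : ℝ), ∀ t ∈ Set.Ioc (0 : ℝ) (lam 0), 0 ≤ f α t ∧ f α t ≤ Creg)

/-- `x_α`, the regularized solution of `Ax = ℓ` for the filter family `f`:
`x_α = Σ_n (f_α(λ_n)/λ_n) conj(⟨x_n, ℓ⟩) x_n`. -/
def IsRegSolution (lam : ℕ → ℝ) (e : ℕ → X) (f : ℝ → ℝ → ℝ) (ℓ : ADual X)
    (xa : ℝ → X) : Prop :=
  ∀ α : ℝ, 0 < α →
    HasSum
      (fun n => (((f α (lam n) / lam n : ℝ) : ℂ) * starRingEnd ℂ (dpair (e n) ℓ)) • e n)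
      (xa α)

end defs

section adj
variable {X V : Type*} [NormedAddCommGroup X] [InnerProductSpace ℂ X] [CompleteSpace X]
  [NormedAddCommGroup V] [InnerProductSpace ℂ V] [CompleteSpace V]

/-- The adjoint `S* : V → X*` of a bounded operator `S : X → V`, determined by
`(Sx, v)_V = ⟨x, S*v⟩_{X×X*}` for all `x ∈ X`, `v ∈ V`. -/
def hadj (S : X →L[ℂ] V) : V →L[ℂ] ADual X :=
  LinearMap.mkContinuous
    { toFun := fun v =>
        { toFun := fun x => ⟪S x, v⟫
          map_add' := fun x y => by simp [inner_add_left]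
          map_smul' := fun c x => by simp [inner_smul_left, mul_comm]
          cont := (S.continuous.inner continuous_const) }
      map_add' := fun v w => by ext x; simp [inner_add_right]
      map_smul' := fun c v => by ext x; simp [inner_smul_right] }
    ‖S‖
    (fun v => by
      apply ContinuousLinearMap.opNorm_le_bound
      · positivity
      · intro x
        calc ‖⟪S x, v⟫‖ ≤ ‖S x‖ * ‖v‖ := norm_inner_le_norm _ _
          _ ≤ (‖S‖ * ‖x‖) * ‖v‖ := by gcongr; exact S.le_opNorm x
          _ = ‖S‖ * ‖v‖ * ‖x‖ := by ring)

/-- A bounded operator `T : V → V` is coercive on the range of `S : X → V` if there is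
`β > 0` with `β‖Sx‖² ≤ (Sx, TSx)_V` for all `x ∈ X`. -/
def CoerciveOnRange (S : X →L[ℂ] V) (T : V →L[ℂ] V) : Prop :=
  ∃ β : ℝ, 0 < β ∧ ∀ x : X, β * ‖S x‖ ^ 2 ≤ (⟪T (S x), S x⟫).re

end adj

section key
variable {X V : Type*} [NormedAddCommGroup X] [InnerProductSpace ℂ X] [CompleteSpace X]
  [NormedAddCommGroup V] [InnerProductSpace ℂ V] [CompleteSpace V]

lemma hadj_apply' (S : X →L[ℂ] V) (v : V) (x : X) : hadj S v x = ⟪S x, v⟫ := rfl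

/-- If `‖ℓ x‖ ≤ C ‖S x‖` for all `x`, then `ℓ` is in the range of `S*`. -/
lemma mem_range_hadj_of_bound (S : X →L[ℂ] V) (ℓ : ADual X) (C : ℝ)
    (hC : ∀ x, ‖ℓ x‖ ≤ C * ‖S x‖) : ∃ v : V, hadj S v = ℓ := by
  classical
  -- the linear (not conjugate-linear) functional `x ↦ conj (ℓ x)`
  set φ : X →ₗ[ℂ] ℂ :=
    { toFun := fun x => starRingEnd ℂ (ℓ x)
      map_add' := fun x y => by simp
      map_smul' := fun c x => by simp [mul_comm] } with hφ
  set p : Submodule ℂ V := LinearMap.range (S : X →ₗ[ℂ] V) with hp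
  have hker : LinearMap.ker (S : X →ₗ[ℂ] V) ≤ LinearMap.ker φ := by
    intro x hx
    have hx' : S x = 0 := hx
    have h0 : ‖ℓ x‖ ≤ 0 := by simpa [hx'] using hC x
    have : ℓ x = 0 := norm_le_zero_iff.mp h0
    simp [hφ, this, LinearMap.mem_ker]
  -- the induced functional on `p = range S`
  set f : p →ₗ[ℂ] ℂ :=
    ((LinearMap.ker (S : X →ₗ[ℂ] V)).liftQ φ hker).comp
      ((S : X →ₗ[ℂ] V).quotKerEquivRange.symm : p →ₗ[ℂ] X ⧸ LinearMap.ker (S : X →ₗ[ℂ] V))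
    with hf
  have hfS : ∀ x : X, f ⟨S x, LinearMap.mem_range_self _ x⟩ = φ x := by
    intro x
    have h1 : (S : X →ₗ[ℂ] V).quotKerEquivRange (Submodule.Quotient.mk x)
        = ⟨S x, LinearMap.mem_range_self _ x⟩ := by
      apply Subtype.ext
      exact LinearMap.quotKerEquivRange_apply_mk _ x
    have h2 : (S : X →ₗ[ℂ] V).quotKerEquivRange.symm ⟨S x, LinearMap.mem_range_self _ x⟩
        = Submodule.Quotient.mk x := by
      rw [← h1]; exact LinearEquiv.symm_apply_apply _ _
    simp [hf, h2, Submodule.liftQ_apply]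
  have hfbound : ∀ y : p, ‖f y‖ ≤ C * ‖y‖ := by
    rintro ⟨y, hy⟩
    obtain ⟨x, rfl⟩ := hy
    have h1 : f ⟨(S : X →ₗ[ℂ] V) x, ⟨x, rfl⟩⟩ = φ x := hfS x
    have h2 : ‖(⟨(S : X →ₗ[ℂ] V) x, ⟨x, rfl⟩⟩ : p)‖ = ‖S x‖ := rfl
    rw [h1, h2]
    have h3 : ‖φ x‖ = ‖ℓ x‖ := by simp [hφ]
    rw [h3]
    exact hC x
  set fc : p →L[ℂ] ℂ := f.mkContinuous C hfbound with hfc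
  -- the closure of the range, a complete subspace
  set M : Submodule ℂ V := p.topologicalClosure with hM
  -- the inclusion `p → M` as a continuous linear map
  set e₀ : p →ₗ[ℂ] M := Submodule.inclusion p.le_topologicalClosure with he₀
  have he₀norm : ∀ y : p, ‖e₀ y‖ = ‖y‖ := fun y => rfl
  set e : p →L[ℂ] M := e₀.mkContinuous 1 (fun y => by rw [he₀norm, one_mul]) with he
  have hiso : Isometry e := AddMonoidHomClass.isometry_of_norm e he₀norm
  have h_e : IsUniformInducing e := hiso.isUniformInducing
  have h_dense : DenseRange e := by
    refine IsInducing.subtypeVal.dense_iff.2 fun m => ?_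
    have hsub : (p : Set V) ⊆ Subtype.val '' Set.range ⇑e :=
      fun y hy => ⟨e ⟨y, hy⟩, ⟨⟨y, hy⟩, rfl⟩, rfl⟩
    exact closure_mono hsub m.2
  -- extend `fc` to `M` and apply the Riesz representation
  set F : M →L[ℂ] ℂ := fc.extend e with hF
  set v₀ : M := (InnerProductSpace.toDual ℂ M).symm F with hv₀
  refine ⟨(v₀ : V), ?_⟩
  ext x
  have hmem : S x ∈ p := LinearMap.mem_range_self _ x
  have hinner : ⟪(v₀ : V), S x⟫ = φ x := by
    have h1 : ⟪(v₀ : V), S x⟫ = ⟪v₀, e ⟨S x, hmem⟩⟫ := by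
      rfl
    rw [h1, InnerProductSpace.toDual_symm_apply]
    have h2 : F (e ⟨S x, hmem⟩) = fc ⟨S x, hmem⟩ :=
      ContinuousLinearMap.extend_eq fc h_dense h_e _
    rw [h2]
    exact hfS x
  have : hadj S (v₀ : V) x = ⟪S x, (v₀ : V)⟫ := rfl
  rw [this, ← inner_conj_symm, hinner]
  simp [hφ]

end key

/-- If `c₁‖Sx‖ ≤ ‖Qx‖ ≤ c₂‖Sx‖` with `0 < c₁ ≤ c₂`, then
`Range(S*) = Range(Q*)`. -/
theorem range_adjS_eq_range_adjQ_of_norm_equiv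
    {X V H : Type*}
    [NormedAddCommGroup X] [InnerProductSpace ℂ X] [CompleteSpace X]
    [NormedAddCommGroup V] [InnerProductSpace ℂ V] [CompleteSpace V]
    [NormedAddCommGroup H] [InnerProductSpace ℂ H] [CompleteSpace H]
    (S : X →L[ℂ] V) (Q : X →L[ℂ] H) (c₁ c₂ : ℝ)
    (hc₁ : 0 < c₁) (hc₁₂ : c₁ ≤ c₂)
    (hbound : ∀ x : X, c₁ * ‖S x‖ ≤ ‖Q x‖ ∧ ‖Q x‖ ≤ c₂ * ‖S x‖) :
    Set.range ⇑(hadj S) = Set.range ⇑(hadj Q) := by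
  apply Set.Subset.antisymm
  · rintro ℓ ⟨v, rfl⟩
    obtain ⟨h, hh⟩ := mem_range_hadj_of_bound Q (hadj S v) (‖v‖ / c₁) (fun x => by
      have h1 : ‖hadj S v x‖ = ‖⟪S x, v⟫‖ := rfl
      have h2 : ‖⟪S x, v⟫‖ ≤ ‖S x‖ * ‖v‖ := norm_inner_le_norm _ _
      have h3 : ‖S x‖ ≤ ‖Q x‖ / c₁ := by
        rw [le_div_iff₀ hc₁]
        have := (hbound x).1
        linarith [mul_comm c₁ ‖S x‖]
      calc ‖hadj S v x‖ ≤ ‖S x‖ * ‖v‖ := by rw [h1]; exact h2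
        _ ≤ (‖Q x‖ / c₁) * ‖v‖ := by gcongr
        _ = ‖v‖ / c₁ * ‖Q x‖ := by ring)
    exact ⟨h, hh⟩
  · rintro ℓ ⟨w, rfl⟩
    obtain ⟨v, hv⟩ := mem_range_hadj_of_bound S (hadj Q w) (c₂ * ‖w‖) (fun x => by
      have h1 : ‖hadj Q w x‖ = ‖⟪Q x, w⟫‖ := rfl
      calc ‖hadj Q w x‖ ≤ ‖Q x‖ * ‖w‖ := by rw [h1]; exact norm_inner_le_norm _ _
        _ ≤ (c₂ * ‖S x‖) * ‖w‖ := by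
            gcongr
            exact (hbound x).2
        _ = c₂ * ‖w‖ * ‖S x‖ := by ring)
    exact ⟨v, hv⟩
end
end

section
/- Let X be a separable complex Hilbert space, A : X → X* a positive compact linear operator with spectral data {λ_n; x_n; ℓ_n}, and {f_α}_{α>0} a family of filter functions satisfying additionally f_α(t) ≤ 1 for all α > 0 and t ∈ (0, λ₁]. Then for every ℓ ∈ X*, with x_α the regularized solution of Ax = ℓ, the limit lim_{α→0} ⟨x_α, Ax_α⟩_{X×X*} exists in [0, ∞] and equals Σ_n (1/λ_n) |⟨x_n, ℓ⟩_{X×X*}|². -/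
open Complex InnerProductSpace Filter Topology ENNReal TopologicalSpace

noncomputable section

local notation "⟪" x ", " y "⟫" => @inner ℂ _ _ x y

section auxlemmas
variable {X : Type*} [NormedAddCommGroup X] [InnerProductSpace ℂ X] [CompleteSpace X]

lemma inner_rieszJ (ℓ : ADual X) (x : X) : ⟪rieszJ ℓ, x⟫ = starRingEnd ℂ (ℓ x) :=
  InnerProductSpace.toDual_symm_apply

/-- evaluation at a point as a continuous linear map on `ADual X` -/
def evCLM (y : X) : ADual X →L[ℂ] ℂ :=
  LinearMap.mkContinuous
    { toFun := fun ℓ => ℓ y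
      map_add' := fun _ _ => rfl
      map_smul' := fun _ _ => rfl }
    ‖y‖ (fun ℓ => (ℓ.le_opNorm y).trans_eq (mul_comm _ _))

lemma hasSum_dpair_aux (A : X →L[ℂ] ADual X) {lam : ℕ → ℝ} {e : ℕ → X}
    (horth : Orthonormal ℂ e) (heig : ∀ n, rieszJ (A (e n)) = (lam n : ℂ) • e n)
    (c : ℕ → ℂ) (x : X) (hx : HasSum (fun n => c n • e n) x) :
    HasSum (fun n => lam n * ‖c n‖ ^ 2) ((dpair x (A x)).re) := by
  have hforall : ∀ n m, (A (e n)) (e m) = if n = m then (lam n : ℂ) else 0 := by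
    intro n m
    have h1 : ⟪rieszJ (A (e n)), e m⟫ = starRingEnd ℂ ((A (e n)) (e m)) := inner_rieszJ _ _
    rw [heig n, inner_smul_left, orthonormal_iff_ite.mp horth] at h1
    have := congrArg (starRingEnd ℂ) h1
    simpa [apply_ite (starRingEnd ℂ)] using this.symm
  have hAx : HasSum (fun n => c n • A (e n)) (A x) := by
    have h := A.hasSum hx
    simpa [map_smul] using h
  have hev : ∀ m, (A x) (e m) = c m * lam m := by
    intro m
    have h := (evCLM (e m)).hasSum hAx
    have h2 : (fun n => (evCLM (e m)) (c n • A (e n))) =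
        fun n => if n = m then c m * (lam m : ℂ) else 0 := by
      funext n
      have : (evCLM (e m)) (c n • A (e n)) = c n * (A (e n)) (e m) := rfl
      rw [this, hforall n m]
      rcases eq_or_ne n m with h | h <;> simp [h]
    rw [h2] at h
    exact h.unique (hasSum_ite_eq m _)
  have hxx : HasSum (fun m => starRingEnd ℂ (c m) * (c m * (lam m : ℂ))) ((A x) x) := by
    have h := (A x).hasSum hx
    have h2 : (fun n => (A x) (c n • e n)) =
        fun n => starRingEnd ℂ (c n) * (c n * (lam n : ℂ)) := by
      funext n
      rw [ContinuousLinearMap.map_smulₛₗ, hev n]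
      rfl
    rwa [h2] at h
  have hre := Complex.reCLM.hasSum hxx
  have h3 : (fun m => Complex.reCLM (starRingEnd ℂ (c m) * (c m * (lam m : ℂ)))) =
      fun m => lam m * ‖c m‖ ^ 2 := by
    funext m
    have this1 : starRingEnd ℂ (c m) * (c m * (lam m : ℂ)) = ((‖c m‖ ^ 2 * lam m : ℝ) : ℂ) := by
      rw [← mul_assoc]
      rw [show starRingEnd ℂ (c m) * c m = ((‖c m‖ ^ 2 : ℝ) : ℂ) by
        rw [mul_comm, Complex.mul_conj, Complex.normSq_eq_norm_sq]]
      norm_cast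
    rw [show Complex.reCLM (starRingEnd ℂ (c m) * (c m * (lam m : ℂ))) =
        (starRingEnd ℂ (c m) * (c m * (lam m : ℂ))).re from rfl, this1,
      Complex.ofReal_re, mul_comm]
  rw [h3] at hre
  have h4 : (dpair x (A x)).re = ((A x) x).re := Complex.conj_re _
  rwa [h4]

end auxlemmas

/-- If additionally `f_α(t) ≤ 1` for all `α > 0` and `t ∈ (0, λ₁]`, then
for every `ℓ ∈ X*` the limit `lim_{α→0} ⟨x_α, Ax_α⟩` exists in `[0, ∞]` and equals
`Σ_n (1/λ_n)|⟨x_n, ℓ⟩|²`. -/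
theorem limit_regularized_eq_picard_sum
    {X : Type*} [NormedAddCommGroup X] [InnerProductSpace ℂ X] [CompleteSpace X]
    [SeparableSpace X]
    (A : X →L[ℂ] ADual X) (hpos : IsPositiveOp A) (hcpt : IsCompactOperator ⇑A)
    (lam : ℕ → ℝ) (e : ℕ → X) (l : ℕ → ADual X)
    (hspec : SpectralData A lam e l)
    (Creg : ℝ) (f : ℝ → ℝ → ℝ) (hf : IsFilterFamily lam Creg f)
    (hf1 : ∀ α > (0 : ℝ), ∀ t ∈ Set.Ioc (0 : ℝ) (lam 0), f α t ≤ 1) :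
    ∀ (ℓ : ADual X) (xa : ℝ → X), IsRegSolution lam e f ℓ xa →
      Tendsto (fun α => ENNReal.ofReal ((dpair (xa α) (A (xa α))).re))
        (𝓝[>] (0 : ℝ))
        (𝓝 (∑' n, ENNReal.ofReal ((1 / lam n) * ‖dpair (e n) ℓ‖ ^ 2))) := by
  intro ℓ xa hreg
  obtain ⟨hC, htend, hbnd⟩ := hf
  set g : ℕ → ℝ := fun n => ‖dpair (e n) ℓ‖ ^ 2 with hg
  have hlam_mem : ∀ n, lam n ∈ Set.Ioc (0 : ℝ) (lam 0) :=
    fun n => ⟨hspec.pos n, hspec.anti (Nat.zero_le n)⟩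
  set F : ℝ → ℕ → ℝ≥0∞ := fun α n => ENNReal.ofReal ((f α (lam n)) ^ 2 / lam n * g n) with hF
  set G : ℕ → ℝ≥0∞ := fun n => ENNReal.ofReal ((1 / lam n) * g n) with hG
  have hgnn : ∀ n, 0 ≤ g n := fun n => sq_nonneg _
  have hval : ∀ α ∈ Set.Ioi (0 : ℝ),
      ENNReal.ofReal ((dpair (xa α) (A (xa α))).re) = ∑' n, F α n := by
    intro α hα
    have hs := hasSum_dpair_aux A hspec.orthonormal hspec.eig _ _ (hreg α hα)
    have hterm : (fun n => lam n *
        ‖(((f α (lam n) / lam n : ℝ) : ℂ) * starRingEnd ℂ (dpair (e n) ℓ))‖ ^ 2) =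
        fun n => (f α (lam n)) ^ 2 / lam n * g n := by
      funext n
      have hln : (0 : ℝ) < lam n := hspec.pos n
      have hfn : 0 ≤ f α (lam n) := (hbnd α hα (lam n) (hlam_mem n)).1
      rw [norm_mul, mul_pow, RCLike.norm_conj, Complex.norm_real, Real.norm_eq_abs,
        _root_.abs_of_nonneg (div_nonneg hfn hln.le)]
      simp only [hg]
      field_simp
    rw [hterm] at hs
    rw [← hs.tsum_eq, ENNReal.ofReal_tsum_of_nonneg
      (fun n => mul_nonneg (div_nonneg (sq_nonneg _) (hspec.pos n).le) (hgnn n)) hs.summable]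
  have hcongr : (fun α => ENNReal.ofReal ((dpair (xa α) (A (xa α))).re)) =ᶠ[𝓝[>] (0 : ℝ)]
      fun α => ∑' n, F α n := eventually_nhdsWithin_of_forall hval
  have hlimsup : limsup (fun α => ∑' n, F α n) (𝓝[>] (0 : ℝ)) ≤ ∑' n, G n := by
    apply limsup_le_of_le (by isBoundedDefault)
    apply eventually_nhdsWithin_of_forall
    intro α hα
    apply ENNReal.tsum_le_tsum
    intro n
    apply ENNReal.ofReal_le_ofReal
    have h1 : 0 ≤ f α (lam n) := (hbnd α hα (lam n) (hlam_mem n)).1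
    have h2 : f α (lam n) ≤ 1 := hf1 α hα (lam n) (hlam_mem n)
    have hsq : (f α (lam n)) ^ 2 ≤ 1 := by nlinarith
    have hln : (0 : ℝ) < lam n := hspec.pos n
    exact mul_le_mul_of_nonneg_right ((div_le_div_iff_of_pos_right hln).mpr hsq) (hgnn n)
  have hliminf : ∑' n, G n ≤ liminf (fun α => ∑' n, F α n) (𝓝[>] (0 : ℝ)) := by
    rw [ENNReal.tsum_eq_iSup_sum]
    apply iSup_le
    intro s
    have hts : Tendsto (fun α => ∑ n ∈ s, F α n) (𝓝[>] (0 : ℝ)) (𝓝 (∑ n ∈ s, G n)) := by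
      apply tendsto_finset_sum
      intro n _
      have h1 : Tendsto (fun α => f α (lam n)) (𝓝[>] (0 : ℝ)) (𝓝 1) :=
        htend (lam n) (hlam_mem n)
      have h2 : Tendsto (fun α => (f α (lam n)) ^ 2 / lam n * g n) (𝓝[>] (0 : ℝ))
          (𝓝 (1 / lam n * g n)) := by
        have h3 := ((h1.pow 2).div_const (lam n)).mul_const (g n)
        simpa using h3
      exact (ENNReal.continuous_ofReal.tendsto _).comp h2
    calc ∑ n ∈ s, G n = liminf (fun α => ∑ n ∈ s, F α n) (𝓝[>] (0 : ℝ)) := hts.liminf_eq.symm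
      _ ≤ liminf (fun α => ∑' n, F α n) (𝓝[>] (0 : ℝ)) :=
        liminf_le_liminf (Eventually.of_forall fun α => ENNReal.sum_le_tsum s)
  exact (tendsto_of_le_liminf_of_limsup_le hliminf hlimsup).congr' hcongr.symm
end
end

section
/- Let X be a separable complex Hilbert space, A : X → X* a positive compact linear operator with spectral data {λ_n; x_n; ℓ_n}, ℓ ∈ X*, and α > 0. Then the functional J_α(ℓ; x) = α ⟨x, Ax⟩_{X×X*} + ‖Ax − ℓ‖²_{X*} has a unique minimizer over X, given by x_α = Σ_n (λ_n/(α λ_n + λ_n²)) conj(⟨x_n, ℓ⟩_{X×X*}) x_n. -/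
open Complex InnerProductSpace Filter Topology ENNReal TopologicalSpace

noncomputable section

local notation "⟪" x ", " y "⟫" => @inner ℂ _ _ x y

section myaux
variable {X : Type*} [NormedAddCommGroup X] [InnerProductSpace ℂ X] [CompleteSpace X]

lemma rieszJ_inner (φ : ADual X) (x : X) : ⟪rieszJ φ, x⟫ = starRingEnd ℂ (φ x) := by
  rw [rieszJ, InnerProductSpace.toDual_symm_apply]
  rfl

lemma rieszJ_norm_le (φ : ADual X) : ‖rieszJ φ‖ ≤ ‖φ‖ := by
  rw [rieszJ, LinearIsometryEquiv.norm_map]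
  refine ContinuousLinearMap.opNorm_le_bound _ (norm_nonneg φ) fun x => ?_
  calc ‖starRingEnd ℂ (φ x)‖ = ‖φ x‖ := by simp
    _ ≤ ‖φ‖ * ‖x‖ := φ.le_opNorm x

lemma rieszJ_sub (φ ψ : ADual X) : rieszJ (φ - ψ) = rieszJ φ - rieszJ ψ := by
  refine ext_inner_right ℂ fun v => ?_
  simp [rieszJ_inner, inner_sub_left]

/-- The operator `T = J ∘ A : X → X`. -/
def glsmT (A : X →L[ℂ] ADual X) : X →L[ℂ] X :=
  LinearMap.mkContinuous
    { toFun := fun x => rieszJ (A x)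
      map_add' := fun x y => by
        refine ext_inner_right ℂ fun v => ?_
        simp [rieszJ_inner, inner_add_left]
      map_smul' := fun c x => by
        refine ext_inner_right ℂ fun v => ?_
        simp [rieszJ_inner, inner_smul_left] }
    ‖A‖ (fun x => by
      calc ‖rieszJ (A x)‖ ≤ ‖A x‖ := rieszJ_norm_le _
        _ ≤ ‖A‖ * ‖x‖ := A.le_opNorm x)

lemma glsmT_apply (A : X →L[ℂ] ADual X) (x : X) : glsmT A x = rieszJ (A x) := rfl

end myaux

/-- For `α > 0` the GLSM functional
`J_α(ℓ; x) = α⟨x, Ax⟩ + ‖Ax − ℓ‖²_{X*}` has a unique minimizer over `X`, given by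
`x_α = Σ_n (λ_n/(αλ_n + λ_n²)) conj(⟨x_n, ℓ⟩) x_n`. -/
theorem glsm_unique_minimizer
    {X : Type*} [NormedAddCommGroup X] [InnerProductSpace ℂ X] [CompleteSpace X]
    [SeparableSpace X]
    (A : X →L[ℂ] ADual X) (hpos : IsPositiveOp A) (hcpt : IsCompactOperator ⇑A)
    (lam : ℕ → ℝ) (e : ℕ → X) (l : ℕ → ADual X)
    (hspec : SpectralData A lam e l)
    (ℓ : ADual X) (α : ℝ) (hα : 0 < α) :
    ∃ xm : X,
      HasSum
        (fun n => (((lam n / (α * lam n + lam n ^ 2) : ℝ) : ℂ) *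
          starRingEnd ℂ (dpair (e n) ℓ)) • e n) xm ∧
      (∀ x : X,
        α * (dpair xm (A xm)).re + ‖rieszJ (A xm - ℓ)‖ ^ 2 ≤
          α * (dpair x (A x)).re + ‖rieszJ (A x - ℓ)‖ ^ 2) ∧
      (∀ y : X,
        (∀ x : X,
          α * (dpair y (A y)).re + ‖rieszJ (A y - ℓ)‖ ^ 2 ≤
            α * (dpair x (A x)).re + ‖rieszJ (A x - ℓ)‖ ^ 2) → y = xm) := by
  classical
  set T : X →L[ℂ] X := glsmT A with hTdef
  have hTapp : ∀ x : X, T x = rieszJ (A x) := fun x => rfl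
  set bv : X := rieszJ ℓ with hbv
  have hdp : ∀ x : X, dpair x (A x) = ⟪T x, x⟫ := fun x => (rieszJ_inner (A x) x).symm
  -- symmetry of T
  have hsym : ∀ x y : X, ⟪T x, y⟫ = ⟪x, T y⟫ := by
    have h := (LinearMap.isSymmetric_iff_inner_map_self_real (T : X →ₗ[ℂ] X)).2 ?_
    · exact fun x y => h x y
    · intro v
      by_cases hv : v = 0
      · simp [hv]
      · have him := (hpos v hv).2
        have h2 : (⟪(T : X →ₗ[ℂ] X) v, v⟫ : ℂ) = dpair v (A v) := (hdp v).symm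
        rw [Complex.conj_eq_iff_im, h2]
        exact him
  -- Hilbert basis
  let hb : HilbertBasis ℕ ℂ X := HilbertBasis.mk hspec.orthonormal hspec.complete.ge
  have hbcoe : ⇑hb = e := HilbertBasis.coe_mk _ _
  set g : lp (fun _ : ℕ => ℂ) 2 := hb.repr bv with hgdef
  have hgapp : ∀ n, g n = ⟪e n, bv⟫ := fun n => by
    rw [hgdef, hb.repr_apply_apply, hbcoe]
  set c : ℕ → ℂ := fun n => (((α + lam n : ℝ) : ℂ))⁻¹ * g n with hcdef
  have hcnorm : ∀ n, ‖c n‖ ≤ α⁻¹ * ‖g n‖ := by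
    intro n
    have hl := (hspec.pos n).le
    rw [hcdef]
    simp only [norm_mul, norm_inv]
    have h1 : ‖((α + lam n : ℝ) : ℂ)‖ = α + lam n := by
      rw [Complex.norm_real]
      exact Real.norm_of_nonneg (by linarith)
    rw [h1]
    have h2 : (α + lam n)⁻¹ ≤ α⁻¹ := by
      apply inv_anti₀ hα (by linarith)
    exact mul_le_mul_of_nonneg_right h2 (norm_nonneg _)
  have hmem : Memℓp c 2 := by
    apply memℓp_gen
    have hg2 : Summable fun n => ‖g n‖ ^ (2 : ℝ≥0∞).toReal :=
      (lp.memℓp g).summable (by norm_num)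
    refine Summable.of_nonneg_of_le (fun n => Real.rpow_nonneg (norm_nonneg _) _)
      (fun n => ?_) (hg2.mul_left (α⁻¹ ^ (2 : ℝ≥0∞).toReal))
    calc ‖c n‖ ^ (2 : ℝ≥0∞).toReal ≤ (α⁻¹ * ‖g n‖) ^ (2 : ℝ≥0∞).toReal :=
        Real.rpow_le_rpow (norm_nonneg _) (hcnorm n) ENNReal.toReal_nonneg
      _ = α⁻¹ ^ (2 : ℝ≥0∞).toReal * ‖g n‖ ^ (2 : ℝ≥0∞).toReal :=
        Real.mul_rpow (by positivity) (norm_nonneg _)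
  let f : lp (fun _ : ℕ => ℂ) 2 := ⟨c, hmem⟩
  set xm : X := hb.repr.symm f with hxm
  have hsum : HasSum (fun n => c n • e n) xm := by
    have h := hb.hasSum_repr_symm f
    rw [hbcoe] at h
    exact h
  -- coefficient identity
  have hcoef : ∀ n, (((lam n / (α * lam n + lam n ^ 2) : ℝ) : ℂ) *
      starRingEnd ℂ (dpair (e n) ℓ)) = c n := by
    intro n
    have hl := hspec.pos n
    have hne1 : α * lam n + lam n ^ 2 ≠ 0 := by positivity
    have hne2 : α + lam n ≠ 0 := by positivity
    have h1 : (lam n / (α * lam n + lam n ^ 2) : ℝ) = (α + lam n)⁻¹ := by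
      field_simp
    have h2 : starRingEnd ℂ (dpair (e n) ℓ) = g n := by
      rw [hgapp n, ← inner_conj_symm (e n) bv, hbv, rieszJ_inner]
      rfl
    rw [h1, h2, hcdef]
    push_cast
    ring
  have hfun : (fun n => (((lam n / (α * lam n + lam n ^ 2) : ℝ) : ℂ) *
      starRingEnd ℂ (dpair (e n) ℓ)) • e n) = fun n => c n • e n := by
    funext n; rw [hcoef n]
  -- the Euler equation α•xm + T xm = bv
  have hTe : ∀ n, T (e n) = ((lam n : ℝ) : ℂ) • e n := fun n => by
    rw [hTapp, hspec.eig n]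
  have hsumT : HasSum (fun n => ((lam n : ℂ) * c n) • e n) (T xm) := by
    have h := T.hasSum hsum
    have hfe : (fun n => T (c n • e n)) = fun n => ((lam n : ℂ) * c n) • e n := by
      funext n
      rw [map_smul, hTe n, smul_smul, mul_comm]
    rwa [hfe] at h
  have hsumA : HasSum (fun n => ((α : ℂ) * c n) • e n) ((α : ℂ) • xm) := by
    simpa [smul_smul] using hsum.const_smul (α : ℂ)
  have hsumB : HasSum (fun n => g n • e n) ((α : ℂ) • xm + T xm) := by
    have hadd := hsumA.add hsumT
    have hfun2 : (fun n => ((α : ℂ) * c n) • e n + ((lam n : ℂ) * c n) • e n)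
        = fun n => g n • e n := by
      funext n
      rw [← add_smul]
      congr 1
      have hne : ((α + lam n : ℝ) : ℂ) ≠ 0 := by
        simp only [ne_eq, Complex.ofReal_eq_zero]
        have := hspec.pos n
        positivity
      have h3 : (α : ℂ) * c n + (lam n : ℂ) * c n = (((α + lam n : ℝ) : ℂ)) * c n := by
        push_cast; ring
      rw [h3, hcdef, ← mul_assoc, mul_inv_cancel₀ hne, one_mul]
    rw [← hfun2]
    exact hadd
  have hsumb : HasSum (fun n => g n • e n) bv := by
    have h := hb.hasSum_repr bv
    rw [hbcoe] at h
    exact h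
  have heq : (α : ℂ) • xm + T xm = bv := hsumB.unique hsumb
  have hTxm : T xm - bv = -((α : ℂ) • xm) := by rw [← heq]; abel
  -- functional bridge
  have hF : ∀ x : X, α * (dpair x (A x)).re + ‖rieszJ (A x - ℓ)‖ ^ 2
      = α * (⟪T x, x⟫ : ℂ).re + ‖T x - bv‖ ^ 2 := by
    intro x
    rw [hdp x, rieszJ_sub, ← hTapp x, ← hbv]
  -- nonnegativity / positivity
  have hnn : ∀ h : X, 0 ≤ (⟪T h, h⟫ : ℂ).re := by
    intro h
    by_cases hh : h = 0
    · simp [hh]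
    · have h1 := (hpos h hh).1
      rw [hdp h] at h1
      exact h1.le
  have hreal : ∀ x y : X, (⟪T y, x⟫ : ℂ).re = (⟪T x, y⟫ : ℂ).re := by
    intro x y
    rw [hsym y x, ← inner_conj_symm y (T x), Complex.conj_re]
  -- quadratic expansion
  have hexp : ∀ h : X, α * (⟪T (xm + h), xm + h⟫ : ℂ).re + ‖T (xm + h) - bv‖ ^ 2
      = (α * (⟪T xm, xm⟫ : ℂ).re + ‖T xm - bv‖ ^ 2)
        + (α * (⟪T h, h⟫ : ℂ).re + ‖T h‖ ^ 2) := by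
    intro h
    have hTadd : T (xm + h) = T xm + T h := map_add T xm h
    have e2 : T (xm + h) - bv = (T xm - bv) + T h := by rw [hTadd]; abel
    have e3 : ‖(T xm - bv) + T h‖ ^ 2
        = ‖T xm - bv‖ ^ 2 + 2 * (⟪T xm - bv, T h⟫ : ℂ).re + ‖T h‖ ^ 2 := by
      have h4 := norm_add_sq (𝕜 := ℂ) (T xm - bv) (T h)
      exact h4
    have e4 : (⟪T xm - bv, T h⟫ : ℂ).re = -(α * (⟪T xm, h⟫ : ℂ).re) := by
      rw [hTxm, inner_neg_left, inner_smul_left, Complex.conj_ofReal, ← hsym xm h]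
      simp [Complex.neg_re, Complex.mul_re]
    have e5 : (⟪T (xm + h), xm + h⟫ : ℂ).re
        = (⟪T xm, xm⟫ : ℂ).re + 2 * (⟪T xm, h⟫ : ℂ).re + (⟪T h, h⟫ : ℂ).re := by
      rw [hTadd]
      simp only [inner_add_left, inner_add_right, Complex.add_re]
      rw [hreal xm h]
      ring
    rw [e2, e3, e4, e5]
    ring
  refine ⟨xm, by rw [hfun]; exact hsum, ?_, ?_⟩
  · intro x
    rw [hF x, hF xm]
    have hx : x = xm + (x - xm) := by abel
    have h2 := hexp (x - xm)
    rw [← hx] at h2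
    have h3 := hnn (x - xm)
    nlinarith [sq_nonneg ‖T (x - xm)‖, mul_nonneg hα.le h3]
  · intro y hy
    by_contra hne
    have hneq : y - xm ≠ 0 := sub_ne_zero.mpr hne
    have hpos' := (hpos (y - xm) hneq).1
    rw [hdp (y - xm)] at hpos'
    have h1 := hy xm
    rw [hF y, hF xm] at h1
    have h2 := hexp (y - xm)
    have hyy : y = xm + (y - xm) := by abel
    rw [← hyy] at h2
    nlinarith [sq_nonneg ‖T (y - xm)‖, mul_pos hα hpos']
end
end
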